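/- The modules over the Drinfeld quiver Q_z form a monoidal category C_z: the tensor product of objects (a, f) and (b, g) is the fusion product (a ⊗ b, f ⊗̂ g), the tensor product of morphisms h₁, h₂ is h₁ ⊗ h₂, the unit object is (1, 0) (the monoidal unit of A with the zero morphism z ⊗ 1 → 1), and the associators and unitors of A are morphisms of modules making the pentagon and triangle axioms hold. In particular the associator α_{a,b,c} of A is a module morphism ((a,f) ⊗̂ (b,g)) ⊗̂ (c,h) → (a,f) ⊗̂ ((b,g) ⊗̂ (c,h)), and the unitors of A are module morphisms (a,f) ⊗̂ (1,0) → (a,f) and (1,0) ⊗̂ (a,f) → (a,f). -/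

import Mathlib

/-!
Statement 1: The modules over the Drinfeld quiver `Q_z` form a monoidal category `C_z`:
the tensor product of objects is the fusion product, the tensor product of morphisms is the
tensor product in `A`, the unit is `(𝟙_A, 0)`, and the associators and unitors of `A` are
module morphisms making the pentagon and triangle axioms hold.
-/

open CategoryTheory MonoidalCategory

universe v u

variable {k : Type*} [Field k]
variable {A : Type u} [Category.{v} A] [MonoidalCategory A]
  [Preadditive A] [CategoryTheory.Linear k A] [MonoidalPreadditive A] [MonoidalLinear k A]

/-- The fusion product `f ⊗̂ g` of two modules `(a, f)` and `(b, g)` over the Drinfeld quiver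
`Q_z` of an object `z` of the Drinfeld center of `A`. -/
noncomputable def fus (z : CategoryTheory.Center A) {a b : A}
    (f : z.1 ⊗ a ⟶ a) (g : z.1 ⊗ b ⟶ b) : z.1 ⊗ (a ⊗ b) ⟶ a ⊗ b :=
  (α_ z.1 a b).inv ≫ (f ▷ b)
    + (α_ z.1 a b).inv ≫ ((z.2.β a).hom ▷ b) ≫ (α_ a z.1 b).hom ≫ (a ◁ g)

/-- The category `C_z` of modules over the Drinfeld quiver `Q_z` is monoidal:
* the tensor product of morphisms of modules is a morphism of modules (functoriality of `⊗̂`),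
* the associator of `A` is a morphism of modules
  `((a,f) ⊗̂ (b,g)) ⊗̂ (c,h) → (a,f) ⊗̂ ((b,g) ⊗̂ (c,h))`,
* the right unitor of `A` is a morphism of modules `(a,f) ⊗̂ (𝟙_A, 0) → (a,f)`,
* the left unitor of `A` is a morphism of modules `(𝟙_A, 0) ⊗̂ (a,f) → (a,f)`,
* the pentagon and triangle axioms hold (they hold in `A`, hence in `C_z`, where composition
  and identities are those of `A`). -/
theorem hb_unit (z : CategoryTheory.Center A) :
    (z.2.β (𝟙_ A)).hom ≫ (λ_ z.1).hom = (ρ_ z.1).hom := by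
  have h := z.2.naturality (λ_ (𝟙_ A)).hom
  rw [z.2.monoidal] at h
  simp only [Category.assoc] at h
  rw [← leftUnitor_tensor_hom, leftUnitor_naturality] at h
  rw [leftUnitor_tensor_hom] at h
  simp only [Category.assoc, Iso.hom_inv_id_assoc] at h
  rw [← whiskerRight_iff, comp_whiskerRight, ← cancel_mono (z.2.β (𝟙_ A)).hom,
    ← cancel_epi (α_ z.1 (𝟙_ A) (𝟙_ A)).inv]
  simp only [Category.assoc]
  rw [← h]
  coherence

theorem drinfeldQuiverModules_monoidal (z : CategoryTheory.Center A) :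
    -- tensor product of module morphisms is a module morphism
    (∀ {a a' b b' : A}
      (f : z.1 ⊗ a ⟶ a) (f' : z.1 ⊗ a' ⟶ a') (g : z.1 ⊗ b ⟶ b) (g' : z.1 ⊗ b' ⟶ b')
      (h₁ : a ⟶ a') (h₂ : b ⟶ b'),
      f ≫ h₁ = (z.1 ◁ h₁) ≫ f' → g ≫ h₂ = (z.1 ◁ h₂) ≫ g' →
      fus z f g ≫ (h₁ ⊗ₘ h₂) = (z.1 ◁ (h₁ ⊗ₘ h₂)) ≫ fus z f' g') ∧
    -- the associator of `A` is a morphism of modules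
    (∀ {a b c : A} (f : z.1 ⊗ a ⟶ a) (g : z.1 ⊗ b ⟶ b) (h : z.1 ⊗ c ⟶ c),
      fus z (fus z f g) h ≫ (α_ a b c).hom
        = (z.1 ◁ (α_ a b c).hom) ≫ fus z f (fus z g h)) ∧
    -- the right unitor of `A` is a morphism of modules `(a,f) ⊗̂ (𝟙,0) → (a,f)`
    (∀ {a : A} (f : z.1 ⊗ a ⟶ a),
      fus z f (0 : z.1 ⊗ (𝟙_ A) ⟶ (𝟙_ A)) ≫ (ρ_ a).hom = (z.1 ◁ (ρ_ a).hom) ≫ f) ∧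
    -- the left unitor of `A` is a morphism of modules `(𝟙,0) ⊗̂ (a,f) → (a,f)`
    (∀ {a : A} (f : z.1 ⊗ a ⟶ a),
      fus z (0 : z.1 ⊗ (𝟙_ A) ⟶ (𝟙_ A)) f ≫ (λ_ a).hom = (z.1 ◁ (λ_ a).hom) ≫ f) ∧
    -- the pentagon axiom
    (∀ a b c d : A,
      ((α_ a b c).hom ▷ d) ≫ (α_ a (b ⊗ c) d).hom ≫ (a ◁ (α_ b c d).hom)
        = (α_ (a ⊗ b) c d).hom ≫ (α_ a b (c ⊗ d)).hom) ∧
    -- the triangle axiom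
    (∀ a b : A,
      (α_ a (𝟙_ A) b).hom ≫ (a ◁ (λ_ b).hom) = ((ρ_ a).hom ▷ b)) := by

  refine ⟨?_, ?_, ?_, ?_, ?_, ?_⟩
  · intro a a' b b' f f' g g' h₁ h₂ hf hg
    simp only [fus, Preadditive.add_comp, Preadditive.comp_add, Category.assoc]
    congr 1
    · calc (α_ z.1 a b).inv ≫ f ▷ b ≫ (h₁ ⊗ₘ h₂)
          = 𝟙 _ ⊗≫ ((f ≫ h₁) ▷ b) ⊗≫ (a' ◁ h₂) ⊗≫ 𝟙 _ := by
            rw [MonoidalCategory.tensorHom_def]; monoidal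
        _ = 𝟙 _ ⊗≫ ((z.1 ◁ h₁) ▷ b) ⊗≫ (f' ▷ b ≫ a' ◁ h₂) ⊗≫ 𝟙 _ := by
            rw [hf]; monoidal
        _ = 𝟙 _ ⊗≫ ((z.1 ◁ h₁) ▷ b) ⊗≫ ((z.1 ⊗ a') ◁ h₂ ≫ f' ▷ b') ⊗≫ 𝟙 _ := by
            rw [← whisker_exchange]
        _ = z.1 ◁ (h₁ ⊗ₘ h₂) ≫ (α_ z.1 a' b').inv ≫ f' ▷ b' := by
            rw [MonoidalCategory.tensorHom_def]; monoidal
    · calc (α_ z.1 a b).inv ≫ (z.2.β a).hom ▷ b ≫ (α_ a z.1 b).hom ≫ a ◁ g ≫ (h₁ ⊗ₘ h₂)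
          = 𝟙 _ ⊗≫ (z.2.β a).hom ▷ b ⊗≫ (a ◁ g ≫ h₁ ▷ b) ⊗≫ a' ◁ h₂ ⊗≫ 𝟙 _ := by
            rw [MonoidalCategory.tensorHom_def]; monoidal
        _ = 𝟙 _ ⊗≫ ((z.2.β a).hom ≫ h₁ ▷ z.1) ▷ b ⊗≫ a' ◁ (g ≫ h₂) ⊗≫ 𝟙 _ := by
            rw [whisker_exchange]; monoidal
        _ = 𝟙 _ ⊗≫ ((z.1 ◁ h₁) ≫ (z.2.β a').hom) ▷ b ⊗≫ a' ◁ ((z.1 ◁ h₂) ≫ g') ⊗≫ 𝟙 _ := by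
            rw [← z.2.naturality, hg]
        _ = 𝟙 _ ⊗≫ (z.1 ◁ h₁) ▷ b ⊗≫ ((z.2.β a').hom ▷ b ≫ (a' ⊗ z.1) ◁ h₂) ⊗≫ a' ◁ g' ⊗≫ 𝟙 _ := by
            monoidal
        _ = 𝟙 _ ⊗≫ (z.1 ◁ h₁) ▷ b ⊗≫ ((z.1 ⊗ a') ◁ h₂ ≫ (z.2.β a').hom ▷ b') ⊗≫ a' ◁ g' ⊗≫ 𝟙 _ := by
            rw [← whisker_exchange]
        _ = z.1 ◁ (h₁ ⊗ₘ h₂) ≫ (α_ z.1 a' b').inv ≫ (z.2.β a').hom ▷ b' ≫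
              (α_ a' z.1 b').hom ≫ a' ◁ g' := by
            rw [MonoidalCategory.tensorHom_def]; monoidal
  · intro a b c f g h
    simp [fus, whisker_exchange]; abel
  · intro a f
    simp [fus]
  · intro a f
    have hb : (z.2.β (𝟙_ A)).hom = (ρ_ z.1).hom ≫ (λ_ z.1).inv := by
      rw [← hb_unit z]; simp
    simp [fus, hb]
  · exact fun a b c d => MonoidalCategory.pentagon a b c d
  · exact fun a b => MonoidalCategory.triangle a b
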